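/- Assume SO(n,k,β) is friendly. Let L be a field extension of k and let A ∈ GL(n, L). Then A commutes with ι(X) for every X ∈ SO(n,k,β) if and only if A = c·I_n for some nonzero scalar c ∈ L. -/

import Mathlib

open Matrix Finset

/-- A "rotation" matrix in the plane spanned by coordinates `s` and `t`. -/
def rotMat {k : Type*} [Field k] {n : ℕ} (s t : Fin n) (x y b : k) : Matrix (Fin n) (Fin n) k :=
  fun i j =>
    if i = s then (if j = s then x else if j = t then b else 0)
    else if i = t then (if j = s then y else if j = t then x else 0)
    else if i = j then 1 else 0

lemma det_rotMat {k : Type*} [Field k] {n : ℕ} {s t : Fin n} (hst : s ≠ t) {x y b : k}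
    (hy : y ≠ 0) (hb : b * y = x ^ 2 - 1) :
    (rotMat s t x y b).det = 1 := by
  classical
  obtain ⟨p, hpy, hbval⟩ : ∃ p : k, p * y = x - 1 ∧ b = p * (1 + x) := by
    refine ⟨(x - 1) / y, div_mul_cancel₀ _ hy, ?_⟩
    field_simp
    linear_combination hb
  set X1 : Matrix (Fin n) (Fin n) k :=
    updateRow (1 : Matrix (Fin n) (Fin n) k) s
      ((1 : Matrix (Fin n) (Fin n) k) s + p • (1 : Matrix (Fin n) (Fin n) k) t) with hX1
  set X2 : Matrix (Fin n) (Fin n) k := updateRow X1 t (X1 t + y • X1 s) with hX2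
  set X3 : Matrix (Fin n) (Fin n) k := updateRow X2 s (X2 s + p • X2 t) with hX3
  have e1s : ∀ j, X1 s j = (if j = s then 1 else 0) + p * (if j = t then 1 else 0) := by
    intro j
    simp [hX1, Matrix.one_apply, eq_comm]
  have e1t : ∀ j, X1 t j = (if j = t then 1 else 0) := by
    intro j
    simp [hX1, updateRow_apply, hst.symm, Matrix.one_apply, eq_comm]
  have e2s : ∀ j, X2 s j = (if j = s then 1 else 0) + p * (if j = t then 1 else 0) := by
    intro j
    rw [hX2, updateRow_apply, if_neg hst]
    exact e1s j
  have e2t : ∀ j, X2 t j = y * (if j = s then 1 else 0) + x * (if j = t then 1 else 0) := by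
    intro j
    rw [hX2, updateRow_self, Pi.add_apply, Pi.smul_apply, e1t j, e1s j, smul_eq_mul]
    by_cases hjs : j = s
    · subst hjs
      simp [hst, if_neg (Ne.symm hst)]
    · by_cases hjt : j = t
      · subst hjt
        simp [hjs]
        linear_combination hpy
      · simp [hjs, hjt]
  have e3s : ∀ j, X3 s j = x * (if j = s then 1 else 0) + b * (if j = t then 1 else 0) := by
    intro j
    rw [hX3, updateRow_self, Pi.add_apply, Pi.smul_apply, e2s j, e2t j, smul_eq_mul, hbval]
    by_cases hjs : j = s
    · subst hjs
      simp [hst, if_neg (Ne.symm hst)]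
      linear_combination hpy
    · by_cases hjt : j = t
      · subst hjt
        simp [hjs]
        ring
      · simp [hjs, hjt]
  have e3t : ∀ j, X3 t j = y * (if j = s then 1 else 0) + x * (if j = t then 1 else 0) := by
    intro j
    rw [hX3, updateRow_apply, if_neg hst.symm]
    exact e2t j
  have e3o : ∀ i j, i ≠ s → i ≠ t → X3 i j = if i = j then 1 else 0 := by
    intro i j his hit
    rw [hX3, updateRow_apply, if_neg his, hX2, updateRow_apply, if_neg hit, hX1,
      updateRow_apply, if_neg his, Matrix.one_apply]
  have key : rotMat s t x y b = X3 := by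
    ext i j
    by_cases his : i = s
    · rw [his, e3s j]
      by_cases hjs : j = s <;> by_cases hjt : j = t <;>
        simp [rotMat, hjs, hjt, hst, hst.symm]
    · by_cases hit : i = t
      · rw [hit, e3t j]
        by_cases hjs : j = s <;> by_cases hjt : j = t <;>
          simp [rotMat, hjs, hjt, hst, hst.symm]
      · rw [e3o i j his hit]
        simp [rotMat, his, hit]
  rw [key, hX3, det_updateRow_add_smul_self _ hst,
    hX2, det_updateRow_add_smul_self _ hst.symm,
    hX1, det_updateRow_add_smul_self _ hst, det_one]

lemma rotMat_map {k L : Type*} [Field k] [Field L] {n : ℕ} (s t : Fin n) (x y b : k)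
    (f : k →+* L) : (rotMat s t x y b).map f = rotMat s t (f x) (f y) (f b) := by
  ext i j
  simp [rotMat, Matrix.map_apply, apply_ite f]

lemma rotMat_conj {k : Type*} [Field k] {n : ℕ} {s t : Fin n} (hst : s ≠ t) (d : Fin n → k)
    {x y b : k}
    (h1 : x * (d s * x) + y * (d t * y) = d s)
    (h2 : x * (d s * b) + y * (d t * x) = 0)
    (h3 : b * (d s * b) + x * (d t * x) = d t) :
    (rotMat s t x y b)ᵀ * diagonal d * rotMat s t x y b = diagonal d := by
  classical
  ext i j
  rw [Matrix.mul_apply]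
  simp only [Matrix.mul_diagonal, Matrix.transpose_apply]
  by_cases his : i = s
  · by_cases hjs : j = s
    · rw [his, hjs, Finset.sum_eq_add_of_mem s t (Finset.mem_univ _) (Finset.mem_univ _) hst
        (fun c _ hc => by simp [rotMat, hc.1, hc.2]), diagonal_apply_eq]
      simp [rotMat, hst, hst.symm]
      linear_combination h1
    · by_cases hjt : j = t
      · rw [his, hjt, Finset.sum_eq_add_of_mem s t (Finset.mem_univ _) (Finset.mem_univ _) hst
          (fun c _ hc => by simp [rotMat, hc.1, hc.2]), diagonal_apply_ne d hst]
        simp [rotMat, hst, hst.symm]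
        linear_combination h2
      · rw [Finset.sum_eq_zero, (diagonal_apply_ne d (fun h : i = j => hjs (h ▸ his))).symm]
        intro c _
        by_cases hcs : c = s
        · simp [rotMat, hcs, hjs, hjt, hst]
        · by_cases hct : c = t
          · simp [rotMat, hct, hjs, hjt, hst.symm]
          · simp [rotMat, hcs, hct, hjs, hjt, his]
  · by_cases hit : i = t
    · by_cases hjs : j = s
      · rw [hit, hjs, Finset.sum_eq_add_of_mem s t (Finset.mem_univ _) (Finset.mem_univ _) hst
          (fun c _ hc => by simp [rotMat, hc.1, hc.2]), diagonal_apply_ne d hst.symm]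
        simp [rotMat, hst, hst.symm]
        linear_combination h2
      · by_cases hjt : j = t
        · rw [hit, hjt, Finset.sum_eq_add_of_mem s t (Finset.mem_univ _) (Finset.mem_univ _) hst
            (fun c _ hc => by simp [rotMat, hc.1, hc.2]), diagonal_apply_eq]
          simp [rotMat, hst, hst.symm]
          linear_combination h3
        · rw [Finset.sum_eq_zero, (diagonal_apply_ne d (fun h : i = j => hjt (h ▸ hit))).symm]
          intro c _
          by_cases hcs : c = s
          · simp [rotMat, hcs, hjs, hjt, hst]
          · by_cases hct : c = t
            · simp [rotMat, hct, hjs, hjt, hst.symm]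
            · simp [rotMat, hcs, hct, hjs, hjt, hit]
    · rw [Finset.sum_eq_single i (fun c _ hc => by
        by_cases hcs : c = s
        · simp [rotMat, hcs, his, hit]
        · by_cases hct : c = t
          · simp [rotMat, hct, his, hit]
          · simp [rotMat, hcs, hct, fun h : c = i => hc h]) (fun h => absurd (Finset.mem_univ i) h)]
      by_cases hij : i = j
      · rw [← hij, diagonal_apply_eq]
        simp [rotMat, his, hit]
      · rw [diagonal_apply_ne d hij]
        simp [rotMat, his, hit, hij]

section MulEntries

variable {L : Type*} [Field L] {n : ℕ}

lemma mul_rotMat_apply_s {s t : Fin n} (hst : s ≠ t) (A : Matrix (Fin n) (Fin n) L)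
    (x y b : L) (i : Fin n) :
    (A * rotMat s t x y b) i s = A i s * x + A i t * y := by
  classical
  rw [Matrix.mul_apply, Finset.sum_eq_add_of_mem s t (Finset.mem_univ _) (Finset.mem_univ _) hst
    (fun c _ hc => by simp [rotMat, hc.1, hc.2])]
  simp [rotMat, hst, hst.symm]

lemma mul_rotMat_apply_t {s t : Fin n} (hst : s ≠ t) (A : Matrix (Fin n) (Fin n) L)
    (x y b : L) (i : Fin n) :
    (A * rotMat s t x y b) i t = A i s * b + A i t * x := by
  classical
  rw [Matrix.mul_apply, Finset.sum_eq_add_of_mem s t (Finset.mem_univ _) (Finset.mem_univ _) hst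
    (fun c _ hc => by simp [rotMat, hc.1, hc.2, hst, hst.symm])]
  simp [rotMat, hst, hst.symm]

lemma mul_rotMat_apply_other {s t : Fin n} (A : Matrix (Fin n) (Fin n) L)
    (x y b : L) (i j : Fin n) (hjs : j ≠ s) (hjt : j ≠ t) :
    (A * rotMat s t x y b) i j = A i j := by
  classical
  rw [Matrix.mul_apply, Finset.sum_eq_single j (fun c _ hc => by
    by_cases hcs : c = s
    · simp [rotMat, hcs, hjs, hjt]
    · by_cases hct : c = t
      · simp [rotMat, hct, hjs, hjt]
      · simp [rotMat, hcs, hct, hc])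
    (fun h => absurd (Finset.mem_univ j) h)]
  simp [rotMat, hjs, hjt]

lemma rotMat_mul_apply_s {s t : Fin n} (hst : s ≠ t) (A : Matrix (Fin n) (Fin n) L)
    (x y b : L) (j : Fin n) :
    (rotMat s t x y b * A) s j = x * A s j + b * A t j := by
  classical
  rw [Matrix.mul_apply, Finset.sum_eq_add_of_mem s t (Finset.mem_univ _) (Finset.mem_univ _) hst
    (fun c _ hc => by simp [rotMat, hc.1, hc.2])]
  simp [rotMat, hst, hst.symm]

lemma rotMat_mul_apply_t {s t : Fin n} (hst : s ≠ t) (A : Matrix (Fin n) (Fin n) L)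
    (x y b : L) (j : Fin n) :
    (rotMat s t x y b * A) t j = y * A s j + x * A t j := by
  classical
  rw [Matrix.mul_apply, Finset.sum_eq_add_of_mem s t (Finset.mem_univ _) (Finset.mem_univ _) hst
    (fun c _ hc => by simp [rotMat, hc.1, hc.2, hst, hst.symm])]
  simp [rotMat, hst, hst.symm]

lemma rotMat_mul_apply_other {s t : Fin n} (A : Matrix (Fin n) (Fin n) L)
    (x y b : L) (i j : Fin n) (his : i ≠ s) (hit : i ≠ t) :
    (rotMat s t x y b * A) i j = A i j := by
  classical
  rw [Matrix.mul_apply, Finset.sum_eq_single i (fun c _ hc => by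
    simp [rotMat, his, hit, hc.symm])
    (fun h => absurd (Finset.mem_univ i) h)]
  simp [rotMat, his, hit]

end MulEntries

/-- For a friendly orthogonal group, `Inn_A` is the identity on `SO(n,k,β)` if and only if
`A` is a nonzero scalar multiple of the identity. -/
theorem so_inner_identity_iff_scalar {k L : Type*} [Field k] [Field L] [Algebra k L]
    (hchar : (2 : k) ≠ 0) {n : ℕ} (hn : 2 < n)
    (M : Matrix (Fin n) (Fin n) k) (hMdiag : M.IsDiag) (hM : IsUnit M)
    (hfriendly : ∀ s t : Fin n, ∃ x y : k, y ≠ 0 ∧ x ^ 2 + (M s s / M t t) * y ^ 2 = 1)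
    (A : Matrix (Fin n) (Fin n) L) (hA : IsUnit A) :
    (∀ X : Matrix (Fin n) (Fin n) k, Xᵀ * M * X = M → X.det = 1 →
      A * X.map (algebraMap k L) = X.map (algebraMap k L) * A) ↔
    (∃ c : L, c ≠ 0 ∧ A = c • (1 : Matrix (Fin n) (Fin n) L)) := by
  classical
  constructor
  · intro hcomm
    set f : k →+* L := (algebraMap k L : k →+* L) with hf
    have hfinj : Function.Injective f := f.injective
    set d : Fin n → k := fun i => M i i with hd
    have hMd : M = diagonal d := hMdiag.diagonal_diag.symm
    have hdet : M.det ≠ 0 := by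
      have := M.isUnit_iff_isUnit_det.mp hM
      exact this.ne_zero
    have hdne : ∀ i, d i ≠ 0 := by
      intro i hi
      apply hdet
      rw [hMd, det_diagonal]
      exact Finset.prod_eq_zero (Finset.mem_univ i) hi
    have key : ∀ s t : Fin n, s ≠ t →
        ∃ x y b : k, y ≠ 0 ∧ x ≠ 1 ∧ b * y = x ^ 2 - 1 ∧
          A * rotMat s t (f x) (f y) (f b) = rotMat s t (f x) (f y) (f b) * A := by
      intro s t hst
      obtain ⟨x, y, hy, hxy⟩ := hfriendly t s
      have hxy' : d s * x ^ 2 + d t * y ^ 2 = d s := by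
        field_simp [hd, show M s s ≠ 0 from hdne s] at hxy
        simp only [hd]
        linear_combination hxy
      obtain ⟨b, hdsb⟩ : ∃ b : k, d s * b = -(d t * y) :=
        ⟨-(d t / d s) * y, by field_simp [hdne s]⟩
      have hby : b * y = x ^ 2 - 1 := by
        apply mul_left_cancel₀ (hdne s)
        have : d s * (b * y) = -(d t * y * y) := by
          rw [← mul_assoc, hdsb]; ring
        rw [this]
        linear_combination -hxy'
      have hx1 : x ≠ 1 := by
        intro h
        have h0 : d t * y ^ 2 = 0 := by
          rw [h] at hxy'
          linear_combination hxy'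
        rcases mul_eq_zero.mp h0 with h' | h'
        · exact hdne t h'
        · exact hy (pow_eq_zero_iff (two_ne_zero) |>.mp h')
      have hconj : (rotMat s t x y b)ᵀ * M * rotMat s t x y b = M := by
        rw [hMd]
        refine rotMat_conj hst d ?_ ?_ ?_
        · linear_combination hxy'
        · linear_combination x * hdsb
        · linear_combination b * hdsb - d t * hby
      have hdet1 : (rotMat s t x y b).det = 1 := det_rotMat hst hy hby
      have := hcomm (rotMat s t x y b) hconj hdet1
      rw [rotMat_map s t x y b f] at this
      exact ⟨x, y, b, hy, hx1, hby, this⟩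
    have hmapne : ∀ z : k, z ≠ 0 → f z ≠ 0 := by
      intro z hz h
      exact hz (hfinj (h.trans (map_zero f).symm))
    have offdiag : ∀ i j : Fin n, i ≠ j → A i j = 0 := by
      intro i j hij
      obtain ⟨u, hui, huj⟩ : ∃ u : Fin n, u ≠ i ∧ u ≠ j := by
        by_contra h
        push_neg at h
        have hsub : (Finset.univ : Finset (Fin n)) ⊆ {i, j} := by
          intro u _
          rcases eq_or_ne u i with h' | h'
          · simp [h']
          · simp [h u h']
        have hcard := Finset.card_le_card hsub
        have : ({i, j} : Finset (Fin n)).card ≤ 2 := by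
          refine le_trans (Finset.card_insert_le _ _) ?_
          simp
        rw [Finset.card_univ, Fintype.card_fin] at hcard
        omega
      obtain ⟨x, y, b, hy, hx1, hby, hAB⟩ := key j u (fun h => huj h.symm)
      have E1 : A i j * f x + A i u * f y = A i j := by
        have := congrFun (congrFun hAB i) j
        rwa [mul_rotMat_apply_s (fun h => huj h.symm) A _ _ _ i,
          rotMat_mul_apply_other A _ _ _ i j hij hui.symm] at this
      have E2 : A i j * f b + A i u * f x = A i u := by
        have := congrFun (congrFun hAB i) u
        rwa [mul_rotMat_apply_t (fun h => huj h.symm) A _ _ _ i,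
          rotMat_mul_apply_other A _ _ _ i u hij hui.symm] at this
      have hby' : f b * f y = f x ^ 2 - 1 := by
        have := congrArg f hby
        rwa [_root_.map_mul, map_sub, map_pow, _root_.map_one] at this
      have hkill : (2 - 2 * f x) * A i j = 0 := by
        linear_combination (f x - 1) * E1 - f y * E2 + A i j * hby'
      have h2x : (2 - 2 * f x) ≠ 0 := by
        have : (2 : L) - 2 * f x = f (2 - 2 * x) := by
          rw [map_sub, _root_.map_mul, map_ofNat]
        rw [this]
        apply hmapne
        intro h0
        apply hx1
        have : (2 : k) * (1 - x) = 0 := by linear_combination h0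
        rcases mul_eq_zero.mp this with h' | h'
        · exact absurd h' hchar
        · linear_combination -h'
      exact (mul_eq_zero.mp hkill).resolve_left h2x
    have diag : ∀ s t : Fin n, s ≠ t → A s s = A t t := by
      intro s t hst
      obtain ⟨x, y, b, hy, hx1, hby, hAB⟩ := key s t hst
      have E := congrFun (congrFun hAB t) s
      rw [mul_rotMat_apply_s hst A _ _ _ t, rotMat_mul_apply_t hst A _ _ _ s,
        offdiag t s (Ne.symm hst)] at E
      exact mul_left_cancel₀ (hmapne y hy) (by linear_combination -E)
    set i0 : Fin n := ⟨0, by omega⟩ with hi0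
    have hdiagc : ∀ i : Fin n, A i i = A i0 i0 := by
      intro i
      rcases eq_or_ne i i0 with h | h
      · rw [h]
      · exact diag i i0 h
    have hAeq : A = A i0 i0 • (1 : Matrix (Fin n) (Fin n) L) := by
      ext i j
      rcases eq_or_ne i j with h | h
      · rw [← h]
        simp [Matrix.smul_apply, Matrix.one_apply, hdiagc i]
      · simp [Matrix.smul_apply, Matrix.one_apply, h, offdiag i j h]
    refine ⟨A i0 i0, ?_, hAeq⟩
    intro h0
    rw [hAeq, h0, zero_smul] at hA
    have : IsUnit (0 : Matrix (Fin n) (Fin n) L).det :=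
      ((Matrix.isUnit_iff_isUnit_det _).mp hA)
    haveI hne : Nonempty (Fin n) := ⟨i0⟩
    rw [Matrix.det_zero] at this
    exact this.ne_zero rfl
  · rintro ⟨c, hc, rfl⟩ X hX hdet
    rw [Matrix.smul_mul, Matrix.one_mul, Matrix.mul_smul, Matrix.mul_one]
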